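/- Let a ≥ b ≥ 2, n = a+b+1, and let W = { I ⊨ n : all parts of I are ≥ 2 }. Define ψ(I) = \overline{L_I} R_I, where I = L_I R_I with R_I the longest suffix of I of modulus at most a (equivalently, L_I = i_1⋯i_p with p determined by b+1 = i_1+⋯+i_{p−1}+s, 1 ≤ s ≤ i_p), and \overline{L_I} is the reversal of L_I. Let W_≤ = { I ∈ W : i_1 ≤ Θ⁻_{Ī}(a) } and W_> = { I ∈ W : i_1 > Θ⁻_{Ī}(a) }. Then ψ(W_≤) ⊆ W_>. -/

import Mathlib

open scoped Classical
open MvPolynomial Finset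

noncomputable section

/-- `σ⁺_I(a)`: the minimal partial sum of `I` that is at least `a`. -/
def sigmaP (I : List ℕ) (a : ℝ) : ℝ :=
  sInf {x : ℝ | ∃ k ≤ I.length, x = ((I.take k).sum : ℝ) ∧ a ≤ x}

/-- `Θ⁺_I(a) = σ⁺_I(a) − a`. -/
def thetaP (I : List ℕ) (a : ℝ) : ℝ := sigmaP I a - a

/-- `σ⁻_I(a)`: the maximal partial sum of `I` that is at most `a`. -/
def sigmaM (I : List ℕ) (a : ℝ) : ℝ :=
  sSup {x : ℝ | ∃ k ≤ I.length, x = ((I.take k).sum : ℝ) ∧ x ≤ a}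

/-- `Θ⁻_I(a) = a − σ⁻_I(a)`. -/
def thetaM (I : List ℕ) (a : ℝ) : ℝ := a - sigmaM I a

/-- `w_I = i₁(i₂−1)⋯(i_z−1)`. -/
def wI : List ℕ → ℕ
  | [] => 1
  | i :: t => i * (t.map (· - 1)).prod

/-- `e_I`: the product of elementary symmetric polynomials indexed by the parts of `I`,
in `N` variables. -/
def eComp (N : ℕ) (I : List ℕ) : MvPolynomial (Fin N) ℝ :=
  (I.map fun i => MvPolynomial.esymm (Fin N) ℝ i).prod

/-- The chromatic symmetric function of a graph, truncated to `N` variables. -/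
def csf {V : Type} [Fintype V] (G : SimpleGraph V) (N : ℕ) : MvPolynomial (Fin N) ℝ :=
  ∑ κ : V → Fin N,
    if ∀ u v, G.Adj u v → κ u ≠ κ v then ∏ v, MvPolynomial.X (κ v) else 0

/-- Add a single edge `uv` to a graph. -/
def addE {V : Type} (G : SimpleGraph V) (u v : V) : SimpleGraph V :=
  G ⊔ SimpleGraph.fromRel fun x y => x = u ∧ y = v

/-- The list of consecutive pairs of a list of vertices. -/
def chainE (l : List ℕ) : List (ℕ × ℕ) := l.zip l.tail

/-- The simple graph on `Fin n` with the given list of edges. -/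
def graphOfEdges (n : ℕ) (E : List (ℕ × ℕ)) : SimpleGraph (Fin n) :=
  SimpleGraph.fromRel fun u v => ((u : ℕ), (v : ℕ)) ∈ E

/-- The path on `n` vertices. -/
def pathG (n : ℕ) : SimpleGraph (Fin n) := graphOfEdges n (chainE (List.range n))

/-- The cycle on `n` vertices. -/
def cycleG (n : ℕ) : SimpleGraph (Fin n) :=
  graphOfEdges n (chainE (List.range n ++ [0]))

/-- The tadpole `C_a^l`: a cycle on `a` vertices with a path of `l` edges attached. -/
def tadpoleG (a l : ℕ) : SimpleGraph (Fin (a + l)) :=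
  graphOfEdges (a + l)
    (chainE (List.range a ++ [0]) ++ chainE (0 :: (List.range l).map (· + a)))

/-- The theta graph `θ_{abc}`: two vertices (`0` and `a+b+c-2`) joined by three internally
disjoint paths of lengths `a`, `b`, `c`. -/
def thetaG (a b c : ℕ) : SimpleGraph (Fin (a + b + c - 1)) :=
  graphOfEdges (a + b + c - 1)
    (chainE (0 :: ((List.range (a - 1)).map (· + 1) ++ [a + b + c - 2])) ++
     chainE (0 :: ((List.range (b - 1)).map (· + a) ++ [a + b + c - 2])) ++
     chainE (0 :: ((List.range (c - 1)).map (· + (a + b - 1)) ++ [a + b + c - 2])))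

/-- The index `p` defined by `m = i₁ + ⋯ + i_{p-1} + s` with `1 ≤ s ≤ i_p`:
the least `k` with `i₁ + ⋯ + i_k ≥ m`. -/
def pIdx (I : List ℕ) (m : ℕ) : ℕ := sInf {k | m ≤ (I.take k).sum}

/-- The number `s` defined by `m = i₁ + ⋯ + i_{p-1} + s` with `1 ≤ s ≤ i_p`. -/
def sVal (I : List ℕ) (m : ℕ) : ℕ := m - (I.take (pIdx I m - 1)).sum

/-- The index `q` defined by `m = i₂ + ⋯ + i_q + t` with `1 ≤ t ≤ i_{q+1}`
(convention `i_{z+1} = i₁`). -/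
def qIdx (I : List ℕ) (m : ℕ) : ℕ := sInf {k | m ≤ ((I.tail ++ I.take 1).take k).sum}

/-- The number `t` defined by `m = i₂ + ⋯ + i_q + t` with `1 ≤ t ≤ i_{q+1}`. -/
def tVal (I : List ℕ) (m : ℕ) : ℕ := m - ((I.tail ++ I.take 1).take (qIdx I m - 1)).sum

/-- The part `i_p`. -/
def ipPart (I : List ℕ) (m : ℕ) : ℕ := I.getD (pIdx I m - 1) 0

/-- The second elementary symmetric polynomial evaluated on a list. -/
def e2 : List ℕ → ℤ
  | [] => 0
  | x :: t => (x : ℤ) * t.sum + e2 t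

/-- The cycle-chord coefficient `Δ_I(m)`. -/
def DeltaI (I : List ℕ) (m : ℕ) : ℤ :=
  if (I.headI : ℤ) ≤ (ipPart I m : ℤ) - sVal I m then
    (sVal I m : ℤ) * ((ipPart I m : ℤ) - sVal I m - I.headI)
  else
    e2 ((ipPart I m - sVal I m) ::
        ((I.drop (pIdx I m)).take (qIdx I m - pIdx I m) ++ [tVal I m]))

/-- The length of the prefix `P` in the decomposition `I = PQ`, where `Q` is the shortest
suffix of `I` with `|Q| ≥ a`. -/
def kPhi (a : ℕ) (I : List ℕ) : ℕ := sSup {j | j ≤ I.length ∧ a ≤ (I.drop j).sum}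

/-- The transformation `φ`: writing `I = PQ` with `Q` the shortest suffix of modulus `≥ a`,
`φ(I) = I` if `Q = I`, and otherwise `φ(I) = i₁ · reverse(P∖i₁) · Q`. -/
def phi (a : ℕ) (I : List ℕ) : List ℕ :=
  if kPhi a I = 0 then I
  else I.take 1 ++ ((I.drop 1).take (kPhi a I - 1)).reverse ++ I.drop (kPhi a I)

/-- The starting position of the longest suffix `R_I` of `I` of modulus `≤ a`. -/
def rIdx (a : ℕ) (I : List ℕ) : ℕ := sInf {j | (I.drop j).sum ≤ a}

/-- The partial reversal `ψ(I) = reverse(L_I) R_I`, where `R_I` is the longest suffix of `I`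
of modulus `≤ a` and `L_I` is the complementary prefix. -/
def psi (a : ℕ) (I : List ℕ) : List ℕ :=
  (I.take (rIdx a I)).reverse ++ I.drop (rIdx a I)

/-- The clock coefficient `D_I = Θ⁺_I(2) − Θ⁻_{reverse(φ(I))}(a) + Δ_I(b+1)`. -/
def DI (a b : ℕ) (I : List ℕ) : ℝ :=
  thetaP I 2 - thetaM (phi a I).reverse a + (DeltaI I (b + 1) : ℝ)

end

/-- `ψ(W_≤) ⊆ W_>`: if all parts of `I` are `≥ 2` and `i₁ ≤ Θ⁻_{Ī}(a)`, then `ψ(I)` is a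
composition of `n` with all parts `≥ 2` whose first part exceeds `Θ⁻` of its reversal. -/
theorem stmt11 (a b n : ℕ) (h2 : 2 ≤ b) (hba : b ≤ a) (hn : n = a + b + 1)
    (I : Composition n) (hW : ∀ i ∈ I.blocks, 2 ≤ i)
    (hle : (I.blocks.headI : ℝ) ≤ thetaM I.blocks.reverse a) :
    (∀ i ∈ psi a I.blocks, 2 ≤ i) ∧ (psi a I.blocks).sum = n ∧
      thetaM (psi a I.blocks).reverse a < ((psi a I.blocks).headI : ℝ) := by
  classical
  set B := I.blocks with hB
  have hsum : B.sum = n := I.blocks_sum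
  set T : Set ℕ := {j | (B.drop j).sum ≤ a} with hT
  have hTlen : B.length ∈ T := by simp [hT]
  have hne : T.Nonempty := ⟨B.length, hTlen⟩
  have hrdef : rIdx a B = sInf T := rfl
  have hrle : rIdx a B ≤ B.length := by rw [hrdef]; exact Nat.sInf_le hTlen
  have hrmem : (B.drop (rIdx a B)).sum ≤ a := Nat.sInf_mem hne
  set r := rIdx a B with hr
  have hr0 : r ≠ 0 := by
    intro h
    rw [h, List.drop_zero, hsum, hn] at hrmem
    omega
  have hr1 : 1 ≤ r := Nat.one_le_iff_ne_zero.mpr hr0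
  have hrlt : r - 1 < B.length := by omega
  have hnotmem : r - 1 ∉ T := by
    have hlt : r - 1 < sInf T := by rw [← hrdef]; omega
    exact Nat.notMem_of_lt_sInf hlt
  have hgt : a < (B.drop (r - 1)).sum := by
    by_contra h
    exact hnotmem (le_of_not_gt h)
  have hdrop : B.drop (r - 1) = B[r - 1] :: B.drop r := by
    have := List.drop_eq_getElem_cons hrlt
    rwa [show r - 1 + 1 = r by omega] at this
  have hkey : a < B[r - 1] + (B.drop r).sum := by
    rw [hdrop, List.sum_cons] at hgt; exact hgt
  -- the permutation facts
  have htake : B.take r = B.take (r - 1) ++ [B[r - 1]] := by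
    conv_lhs => rw [show r = (r - 1) + 1 by omega]
    rw [List.take_succ, List.getElem?_eq_getElem hrlt]
    rfl
  have hperm : List.Perm (psi a B) B := by
    have h1 : List.Perm ((B.take r).reverse ++ B.drop r) (B.take r ++ B.drop r) :=
      (List.reverse_perm _).append_right _
    rw [List.take_append_drop] at h1
    exact h1
  refine ⟨fun i hi => hW i (hperm.mem_iff.mp hi), by rw [hperm.sum_eq, hsum], ?_⟩
  -- head of psi
  have hhead : (psi a B).headI = B[r - 1] := by
    rw [psi, ← hr, htake, List.reverse_append]
    rfl
  -- reverse of psi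
  have hrev : (psi a B).reverse = (B.drop r).reverse ++ B.take r := by
    rw [psi, ← hr, List.reverse_append, List.reverse_reverse]
  -- sigmaM bound
  set L := (psi a B).reverse with hL
  set S : Set ℝ := {x : ℝ | ∃ k ≤ L.length, x = ((L.take k).sum : ℝ) ∧ x ≤ a} with hS
  have hbdd : BddAbove S := by
    refine ⟨a, fun x hx => ?_⟩
    obtain ⟨k, _, _, hxa⟩ := hx
    exact hxa
  have hmem : (((B.drop r).sum : ℕ) : ℝ) ∈ S := by
    refine ⟨(B.drop r).length, ?_, ?_, ?_⟩
    · rw [hL, List.length_reverse, psi, ← hr, List.length_append, List.length_reverse]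
      omega
    · rw [hrev, ← List.length_reverse (as := B.drop r), List.take_left, List.sum_reverse]
    · exact_mod_cast hrmem
  have hsle : (((B.drop r).sum : ℕ) : ℝ) ≤ sSup S := le_csSup hbdd hmem
  have hth : thetaM L a = a - sSup S := rfl
  rw [hhead, hth]
  have : (a : ℝ) < B[r - 1] + ((B.drop r).sum : ℝ) := by exact_mod_cast hkey
  linarith
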